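/- Let N = k^t q with k ≥ 2, t ≥ 1, gcd(q,k)=1, and define f on {0,...,N-1} by f(A) = (kA + A_{t-1}) mod N, where A_{t-1} is the coefficient of k^{t-1} in the base-k expansion of A. Let φ(A) = A_0 + A_1 + ... + A_{t-1} be the sum of the t lowest base-k digits of A. Then φ(f(A)) = φ(A) for all A. -/

import Mathlib

theorem digit_sum_invariant (N k t q : ℕ) (hk : 2 ≤ k) (ht : 1 ≤ t) (hq : 1 ≤ q)
    (hco : Nat.Coprime q k) (hN : N = k ^ t * q)
    (f : ℕ → ℕ) (hf : ∀ A, f A = (k * A + A / k ^ (t - 1) % k) % N)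
    (φ : ℕ → ℕ) (hφ : ∀ A, φ A = ∑ i ∈ Finset.range t, A / k ^ i % k) :
    ∀ A < N, φ (f A) = φ A := by
  intro A hA
  have hk0 : 0 < k := by omega
  obtain ⟨s, rfl⟩ : ∃ s, t = s + 1 := ⟨t - 1, by omega⟩
  simp only [Nat.add_sub_cancel] at hf
  set d := A / k ^ s % k with hd
  have hdk : d < k := Nat.mod_lt _ hk0
  have hx : ∀ i < s + 1, ((k * A + d) % N) / k ^ i % k = (k * A + d) / k ^ i % k := by
    intro i hi
    rw [← Nat.mod_mul_right_div_self, ← Nat.mod_mul_right_div_self, Nat.mod_mod_of_dvd]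
    rw [hN]
    refine Dvd.dvd.mul_right ?_ q
    have h1 : k ^ i * k = k ^ (i + 1) := by ring
    rw [h1]
    exact pow_dvd_pow k hi
  rw [hφ, hφ, hf A]
  rw [Finset.sum_congr rfl (fun i hi => hx i (Finset.mem_range.mp hi))]
  rw [Finset.sum_range_succ' (fun i => (k * A + d) / k ^ i % k) s]
  rw [Finset.sum_range_succ (fun i => A / k ^ i % k) s]
  have h0 : (k * A + d) / k ^ 0 % k = d := by
    simp [Nat.mul_add_mod, Nat.mod_eq_of_lt hdk]
  have hstep : ∀ i, (k * A + d) / k ^ (i + 1) % k = A / k ^ i % k := by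
    intro i
    have h1 : k ^ (i + 1) = k * k ^ i := by ring
    rw [h1, ← Nat.div_div_eq_div_mul]
    congr 2
    rw [Nat.mul_add_div hk0, Nat.div_eq_of_lt hdk, Nat.add_zero]
  rw [h0, Finset.sum_congr rfl (fun i _ => hstep i)]
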